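/- Define polynomials c_{p,j}(r) ∈ ℚ[r] for 0 ≤ p ≤ j by the generating function (1/p!)·(((1+x)^{r+1} − 1 − (r+1)x)/((r+1)x))^p = Σ_{j≥p} c_{p,j}(r) x^j. Then these polynomials satisfy the recursion (p+j)·c_{p,j}(r) = (rp − j + 1)·c_{p,j-1}(r) + r·c_{p-1,j-1}(r), where c_{p,j} := 0 if p > j or p < 0. -/

import Mathlib

/-- The binomial series `(1+x)^(r+1) = ∑_k binom(r+1,k) x^k`, where `r` is a polynomial
variable: the coefficient of `x^k` is the polynomial `binom(r+1,k) ∈ ℚ[r]`. -/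
noncomputable def binSeries : PowerSeries (Polynomial ℚ) :=
  PowerSeries.mk fun k =>
    ((k.factorial : ℚ))⁻¹ • ((descPochhammer ℚ k).comp (Polynomial.X + 1))

/-- Given the power series `G = ((1+x)^{r+1} - 1 - (r+1)x)/((r+1)x)`, the coefficient
`c_{p,j}(r)` is the coefficient of `x^j` in `(1/p!) G^p`; by convention it is `0`
for negative indices. -/
noncomputable def cpj (G : PowerSeries (Polynomial ℚ)) (p j : ℤ) : Polynomial ℚ :=
  if 0 ≤ p ∧ 0 ≤ j then
    ((p.toNat.factorial : ℚ))⁻¹ • (PowerSeries.coeff (R := Polynomial ℚ) j.toNat (G ^ p.toNat))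
  else 0

open PowerSeries in
lemma binSeries_ode :
    (1 + PowerSeries.X) * (d⁄dX (Polynomial ℚ) binSeries)
      = PowerSeries.C (R := Polynomial ℚ) (Polynomial.X + 1) * binSeries := by
  ext k : 1
  rw [add_mul, one_mul, map_add, coeff_C_mul]
  cases k with
  | zero =>
      simp [coeff_derivative, binSeries, descPochhammer_one, descPochhammer_zero,
        Polynomial.smul_eq_C_mul]
  | succ k =>
      rw [coeff_succ_X_mul, coeff_derivative, coeff_derivative, binSeries]
      simp only [coeff_mk]
      rw [descPochhammer_succ_right, Polynomial.mul_comp, Polynomial.sub_comp,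
        Polynomial.X_comp, Polynomial.natCast_comp]
      simp only [Polynomial.smul_eq_C_mul]
      have h2 : (((k+1).factorial : ℚ)) ≠ 0 := Nat.cast_ne_zero.2 (Nat.factorial_ne_zero _)
      have h3 : ((k:ℚ)+2) ≠ 0 := by positivity
      have h1 : (((k+1+1).factorial : ℚ))⁻¹ = ((k:ℚ)+2)⁻¹ * (((k+1).factorial : ℚ))⁻¹ := by
        rw [Nat.factorial_succ]
        push_cast
        rw [mul_inv]
        ring
      have h4 : Polynomial.C ((k:ℚ)+2)⁻¹ * ((k:Polynomial ℚ)+1+1) = 1 := by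
        have h5 : ((k:Polynomial ℚ)+1+1) = Polynomial.C ((k:ℚ)+2) := by
          rw [map_add, Polynomial.C_eq_natCast, map_ofNat]
          ring
        rw [h5, ← map_mul, inv_mul_cancel₀ h3, map_one]
      rw [h1, map_mul]
      push_cast
      linear_combination (Polynomial.C (((k+1).factorial : ℚ))⁻¹ *
        ((descPochhammer ℚ (k+1)).comp (Polynomial.X + 1)) *
        (Polynomial.X + 1 - ((k:Polynomial ℚ)+1))) * h4

open PowerSeries Polynomial in
lemma Crho_ne : PowerSeries.C (R := Polynomial ℚ) (Polynomial.X + 1) ≠ 0 := by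
  intro h
  have h2 := congrArg (PowerSeries.constantCoeff (R := Polynomial ℚ)) h
  simp only [constantCoeff_C, map_zero] at h2
  have h3 : (Polynomial.X + 1 : Polynomial ℚ) ≠ 0 := by
    simpa using Polynomial.X_add_C_ne_zero (1 : ℚ)
  exact h3 h2

open PowerSeries in
lemma G_zero (G : PowerSeries (Polynomial ℚ))
    (hG : PowerSeries.C (R := Polynomial ℚ) (Polynomial.X + 1) * PowerSeries.X * G
        = binSeries - 1 - PowerSeries.C (R := Polynomial ℚ) (Polynomial.X + 1) * PowerSeries.X) :
    PowerSeries.coeff (R := Polynomial ℚ) 0 G = 0 := by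
  have h := congrArg (PowerSeries.coeff (R := Polynomial ℚ) 1) hG
  rw [mul_assoc, coeff_C_mul, coeff_succ_X_mul] at h
  simp only [map_sub, coeff_C_mul, coeff_one, binSeries, coeff_mk] at h
  simp [descPochhammer_one, Polynomial.smul_eq_C_mul] at h
  rw [PowerSeries.coeff_zero_eq_constantCoeff]
  rcases h with h | h
  · exact absurd h (by simpa using Polynomial.X_add_C_ne_zero (1 : ℚ))
  · exact h

open PowerSeries in
lemma G_ode (G : PowerSeries (Polynomial ℚ))
    (hG : PowerSeries.C (R := Polynomial ℚ) (Polynomial.X + 1) * PowerSeries.X * G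
        = binSeries - 1 - PowerSeries.C (R := Polynomial ℚ) (Polynomial.X + 1) * PowerSeries.X) :
    (1 + PowerSeries.X) * (G + PowerSeries.X * (d⁄dX (Polynomial ℚ) G))
      = PowerSeries.C (R := Polynomial ℚ) (Polynomial.X + 1) * (PowerSeries.X * G)
        + PowerSeries.C (R := Polynomial ℚ) Polynomial.X * PowerSeries.X := by
  have hd := congrArg (d⁄dX (Polynomial ℚ)) hG
  simp only [map_sub, Derivation.leibniz, derivative_C, derivative_X, smul_eq_mul, mul_zero,
    mul_one, zero_add, add_zero, map_one, Derivation.map_one_eq_zero, zero_sub, sub_zero] at hd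
  have hC : PowerSeries.C (R := Polynomial ℚ) (Polynomial.X + 1)
      = PowerSeries.C (R := Polynomial ℚ) Polynomial.X + 1 := by rw [map_add, map_one]
  apply mul_left_cancel₀ Crho_ne
  linear_combination (1 + PowerSeries.X) * hd + binSeries_ode
    - PowerSeries.C (R := Polynomial ℚ) (Polynomial.X + 1) * hG
    + PowerSeries.C (R := Polynomial ℚ) (Polynomial.X + 1) * PowerSeries.X * hC

open PowerSeries in
lemma G_ode_pow (G : PowerSeries (Polynomial ℚ))
    (hG : PowerSeries.C (R := Polynomial ℚ) (Polynomial.X + 1) * PowerSeries.X * G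
        = binSeries - 1 - PowerSeries.C (R := Polynomial ℚ) (Polynomial.X + 1) * PowerSeries.X)
    (n : ℕ) :
    PowerSeries.C (R := Polynomial ℚ) ((n : Polynomial ℚ) + 1) * G ^ (n+1)
      + PowerSeries.X * (PowerSeries.C (R := Polynomial ℚ) ((n : Polynomial ℚ) + 1) * G ^ (n+1))
      + PowerSeries.X * (d⁄dX (Polynomial ℚ) (G ^ (n+1)))
      + PowerSeries.X * (PowerSeries.X * (d⁄dX (Polynomial ℚ) (G ^ (n+1))))
    = PowerSeries.C (R := Polynomial ℚ) (Polynomial.X + 1) *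
        (PowerSeries.X * (PowerSeries.C (R := Polynomial ℚ) ((n : Polynomial ℚ) + 1) * G ^ (n+1)))
      + PowerSeries.C (R := Polynomial ℚ) Polynomial.X *
        (PowerSeries.X * (PowerSeries.C (R := Polynomial ℚ) ((n : Polynomial ℚ) + 1) * G ^ n)) := by
  have hp : ∀ m : ℕ, d⁄dX (Polynomial ℚ) (G ^ (m+1))
      = PowerSeries.C (R := Polynomial ℚ) ((m : Polynomial ℚ) + 1) * (G ^ m * d⁄dX (Polynomial ℚ) G) := by
    intro m
    induction m with
    | zero => simp
    | succ m ih =>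
        have h1 : G ^ (m+1+1) = G * G ^ (m+1) := by ring
        rw [h1]
        simp only [Derivation.leibniz, smul_eq_mul, ih]
        have hC : PowerSeries.C (R := Polynomial ℚ) (((m+1 : ℕ) : Polynomial ℚ) + 1)
            = PowerSeries.C (R := Polynomial ℚ) ((m : Polynomial ℚ) + 1) + 1 := by
          push_cast
          rw [map_add, map_one]
        rw [hC]
        ring
  have hp := hp n
  linear_combination (PowerSeries.C (R := Polynomial ℚ) ((n : Polynomial ℚ) + 1) * G ^ n) * (G_ode G hG)
    + (1 + PowerSeries.X) * PowerSeries.X * hp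

open PowerSeries in
lemma coeff_XXd (H : PowerSeries (Polynomial ℚ)) (j : ℕ) :
    PowerSeries.coeff (R := Polynomial ℚ) (j+1)
        (PowerSeries.X * (PowerSeries.X * (d⁄dX (Polynomial ℚ) H)))
      = (j : Polynomial ℚ) * PowerSeries.coeff (R := Polynomial ℚ) j H := by
  cases j with
  | zero =>
      rw [show (0+1 : ℕ) = 0+1 from rfl, coeff_succ_X_mul, coeff_zero_X_mul]
      simp
  | succ k =>
      rw [coeff_succ_X_mul, coeff_succ_X_mul, coeff_derivative]
      push_cast
      ring

open PowerSeries in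
lemma key (G : PowerSeries (Polynomial ℚ))
    (hG : PowerSeries.C (R := Polynomial ℚ) (Polynomial.X + 1) * PowerSeries.X * G
        = binSeries - 1 - PowerSeries.C (R := Polynomial ℚ) (Polynomial.X + 1) * PowerSeries.X)
    (n j : ℕ) :
    ((n : Polynomial ℚ) + 1 + ((j : Polynomial ℚ) + 1)) *
        (((n+1).factorial : ℚ)⁻¹ • PowerSeries.coeff (R := Polynomial ℚ) (j+1) (G ^ (n+1)))
      = (Polynomial.X * ((n : Polynomial ℚ) + 1) - ((j : Polynomial ℚ) + 1) + 1) *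
          (((n+1).factorial : ℚ)⁻¹ • PowerSeries.coeff (R := Polynomial ℚ) j (G ^ (n+1)))
        + Polynomial.X * ((n.factorial : ℚ)⁻¹ • PowerSeries.coeff (R := Polynomial ℚ) j (G ^ n)) := by
  have E := congrArg (PowerSeries.coeff (R := Polynomial ℚ) (j+1)) (G_ode_pow G hG n)
  set c1 : Polynomial ℚ := (n : Polynomial ℚ) + 1 with hc1
  set c2 : Polynomial ℚ := Polynomial.X + 1 with hc2
  simp only [map_add] at E
  rw [coeff_XXd] at E
  simp only [coeff_C_mul, coeff_succ_X_mul, coeff_derivative] at E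
  have f1 : Polynomial.C (((n+1).factorial : ℚ))⁻¹ * ((n : Polynomial ℚ) + 1)
      = Polynomial.C ((n.factorial : ℚ))⁻¹ := by
    rw [show ((n : Polynomial ℚ) + 1) = Polynomial.C ((n : ℚ) + 1) by
      rw [map_add, Polynomial.C_eq_natCast, map_one], ← map_mul]
    congr 1
    rw [Nat.factorial_succ]
    have hn : ((n : ℚ) + 1) ≠ 0 := by positivity
    have hf : ((n.factorial : ℚ)) ≠ 0 := Nat.cast_ne_zero.2 (Nat.factorial_ne_zero _)
    push_cast
    field_simp
  simp only [Polynomial.smul_eq_C_mul]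
  linear_combination Polynomial.C (((n+1).factorial : ℚ))⁻¹ * E
    + Polynomial.X * (PowerSeries.coeff (R := Polynomial ℚ) j (G ^ n)) * f1


/-- The polynomials `c_{p,j}(r)` satisfy
`(p+j)·c_{p,j}(r) = (rp − j + 1)·c_{p,j-1}(r) + r·c_{p-1,j-1}(r)`,
with `c_{p,j} = 0` for negative indices (and automatically for `p > j`). -/
theorem stmt0 (G : PowerSeries (Polynomial ℚ))
    (hG : PowerSeries.C (R := Polynomial ℚ) (Polynomial.X + 1) * PowerSeries.X * G
        = binSeries - 1 - PowerSeries.C (R := Polynomial ℚ) (Polynomial.X + 1) * PowerSeries.X) :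
    ∀ p j : ℤ,
      ((p : Polynomial ℚ) + (j : Polynomial ℚ)) * cpj G p j
        = (Polynomial.X * (p : Polynomial ℚ) - (j : Polynomial ℚ) + 1) * cpj G p (j - 1)
          + Polynomial.X * cpj G (p - 1) (j - 1) := by
  have hz : ∀ a b : ℤ, ¬ (0 ≤ a ∧ 0 ≤ b) → cpj G a b = 0 := by
    intro a b h
    rw [cpj, if_neg h]
  intro p j
  rcases lt_or_ge p 0 with hp | hp
  · rw [hz p j (by omega), hz p (j-1) (by omega), hz (p-1) (j-1) (by omega)]
    ring
  rcases lt_or_ge j 0 with hj | hj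
  · rw [hz p j (by omega), hz p (j-1) (by omega), hz (p-1) (j-1) (by omega)]
    ring
  obtain ⟨P, rfl⟩ := Int.eq_ofNat_of_zero_le hp
  obtain ⟨J, rfl⟩ := Int.eq_ofNat_of_zero_le hj
  cases P with
  | zero =>
      cases J with
      | zero =>
          rw [hz ((0:ℕ):ℤ) (((0:ℕ):ℤ) - 1) (by omega),
              hz (((0:ℕ):ℤ) - 1) (((0:ℕ):ℤ) - 1) (by omega)]
          push_cast
          ring
      | succ J' =>
          rw [show (((J'+1:ℕ)):ℤ) - 1 = (J' : ℤ) by omega,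
              show (((0:ℕ)):ℤ) - 1 = (-1 : ℤ) by omega]
          rw [hz (-1) (J' : ℤ) (by omega)]
          rw [cpj, if_pos ⟨le_refl 0, by positivity⟩, cpj, if_pos ⟨le_refl 0, by positivity⟩]
          simp only [Int.toNat_natCast, Int.toNat_zero, pow_zero, Nat.factorial_zero,
            PowerSeries.coeff_one, Nat.cast_one, inv_one, one_smul]
          rw [if_neg (by omega : ¬ (J' + 1) = 0)]
          by_cases hJ : J' = 0
          · subst hJ
            rw [if_pos rfl]
            push_cast
            ring
          · rw [if_neg hJ]
            push_cast
            ring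
  | succ P' =>
      cases J with
      | zero =>
          rw [show (((0:ℕ)):ℤ) - 1 = (-1 : ℤ) by omega]
          rw [hz ((P'+1:ℕ):ℤ) (-1) (by omega), hz (((P'+1:ℕ):ℤ) - 1) (-1) (by omega)]
          rw [cpj, if_pos ⟨by positivity, le_refl 0⟩]
          simp only [Int.toNat_natCast, Int.toNat_zero]
          rw [PowerSeries.coeff_zero_eq_constantCoeff, map_pow]
          rw [show PowerSeries.constantCoeff (R := Polynomial ℚ) G = 0 from by
            rw [← PowerSeries.coeff_zero_eq_constantCoeff]; exact G_zero G hG]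
          rw [zero_pow (by omega : P' + 1 ≠ 0)]
          simp
      | succ J' =>
          rw [show ((J'+1:ℕ) : ℤ) - 1 = (J' : ℤ) by omega,
              show ((P'+1:ℕ) : ℤ) - 1 = (P' : ℤ) by omega]
          rw [cpj, if_pos ⟨by positivity, by positivity⟩,
              cpj, if_pos ⟨by positivity, by positivity⟩,
              cpj, if_pos ⟨by positivity, by positivity⟩]
          simp only [Int.toNat_natCast]
          push_cast
          linear_combination key G hG P' J'
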